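/- Let e be a probability expression in which, for every atom At(F,s,r) occurring in e, the function F is differentiable at s. Suppose the infinitesimal evaluation evalε(e) is defined and equals ρε^n for some ρ ∈ ℝ and n ∈ ℤ. Then the function x ↦ ⟦e⟧(x)/x^n tends to ρ as x tends to 0 within the punctured neighborhood {x ∈ ℝ : x ≠ 0} (where x^n denotes the integer power zpow). -/
import Mathlib


open Filter Topology

/-- An infinitesimal number `r·ε^n` is a pair of a real coefficient and an
integer exponent. -/
abbrev Infinitesimal := ℝ × ℤ

/-- Addition of infinitesimal numbers: keep only the lowest-order term. -/
noncomputable def iadd (x y : Infinitesimal) : Infinitesimal :=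
  if x.2 = y.2 then (x.1 + y.1, x.2)
  else if x.2 < y.2 then x
  else y

/-- Subtraction of infinitesimal numbers. -/
noncomputable def isub (x y : Infinitesimal) : Infinitesimal :=
  if x.2 = y.2 then (x.1 - y.1, x.2)
  else if x.2 < y.2 then x
  else (-y.1, y.2)

/-- Multiplication of infinitesimal numbers. -/
noncomputable def imul (x y : Infinitesimal) : Infinitesimal :=
  (x.1 * y.1, x.2 + y.2)

/-- Division of infinitesimal numbers: undefined when the denominator has zero
coefficient. -/
noncomputable def idiv (x y : Infinitesimal) : Option Infinitesimal :=
  if y.1 = 0 then none else some (x.1 / y.1, x.2 - y.2)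

/-- Probability expressions: real constants, atoms `At(F,s,r)`, and the four
arithmetic operations. -/
inductive PExpr where
  | const : ℝ → PExpr
  | atom : (ℝ → ℝ) → ℝ → ℝ → PExpr
  | add : PExpr → PExpr → PExpr
  | sub : PExpr → PExpr → PExpr
  | mul : PExpr → PExpr → PExpr
  | div : PExpr → PExpr → PExpr

/-- The real interpretation of a probability expression: an atom `At(F,s,r)` at
`x` is `F (s + r*x/2) - F (s - r*x/2)`, and operations are interpreted in `ℝ`
(with the convention `x / 0 = 0`). -/
noncomputable def PExpr.eval : PExpr → ℝ → ℝ
  | .const c, _ => c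
  | .atom F s r, x => F (s + r * x / 2) - F (s - r * x / 2)
  | .add a b, x => a.eval x + b.eval x
  | .sub a b, x => a.eval x - b.eval x
  | .mul a b, x => a.eval x * b.eval x
  | .div a b, x => a.eval x / b.eval x

/-- The infinitesimal evaluation of a probability expression: a constant `c`
evaluates to `c·ε^0`, an atom `At(F,s,r)` to `(deriv F s * r)·ε^1`, and
operations are interpreted by infinitesimal arithmetic, propagating
undefinedness. -/
noncomputable def PExpr.evalE : PExpr → Option Infinitesimal
  | .const c => some (c, 0)
  | .atom F s r => some (deriv F s * r, 1)
  | .add a b => do let x ← a.evalE; let y ← b.evalE; pure (iadd x y)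
  | .sub a b => do let x ← a.evalE; let y ← b.evalE; pure (isub x y)
  | .mul a b => do let x ← a.evalE; let y ← b.evalE; pure (imul x y)
  | .div a b => do let x ← a.evalE; let y ← b.evalE; idiv x y

/-- The predicate that every atom `At(F,s,r)` occurring in the expression has
`F` differentiable at `s`. -/
def PExpr.goodAtoms : PExpr → Prop
  | .const _ => True
  | .atom F s _ => DifferentiableAt ℝ F s
  | .add a b => a.goodAtoms ∧ b.goodAtoms
  | .sub a b => a.goodAtoms ∧ b.goodAtoms
  | .mul a b => a.goodAtoms ∧ b.goodAtoms
  | .div a b => a.goodAtoms ∧ b.goodAtoms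

/-- **The limit theorem for probability expressions.** If every atom of `e` is
differentiable and the infinitesimal evaluation of `e` is defined and equals
`ρ·ε^n`, then `⟦e⟧(x) / x^n → ρ` as `x → 0` within `{x ≠ 0}`. -/
lemma tendsto_zpow_zero' {m : ℤ} (hm : 0 < m) :
    Tendsto (fun x : ℝ => x ^ m) (𝓝[≠] (0:ℝ)) (𝓝 0) := by
  have h : Tendsto (fun x : ℝ => x ^ m.toNat) (𝓝 (0:ℝ)) (𝓝 0) := by
    have := (continuous_pow m.toNat (M := ℝ)).tendsto 0
    simpa [zero_pow (by omega : m.toNat ≠ 0)] using this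
  refine (h.mono_left nhdsWithin_le_nhds).congr' ?_
  filter_upwards [self_mem_nhdsWithin] with x hx
  rw [← zpow_natCast, Int.toNat_of_nonneg hm.le]

lemma atom_tendsto' (F : ℝ → ℝ) (s r : ℝ) (h : DifferentiableAt ℝ F s) :
    Tendsto (fun x : ℝ => (F (s + r*x/2) - F (s - r*x/2)) / x) (𝓝[≠] (0:ℝ))
      (𝓝 (deriv F s * r)) := by
  rcases eq_or_ne r 0 with hr | hr
  · simp only [hr, zero_mul, mul_zero, zero_div, add_zero, sub_zero, sub_self]
    simpa using (tendsto_const_nhds : Tendsto (fun _ : ℝ => (0:ℝ)) _ (𝓝 0))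
  · have hs : Tendsto (slope F s) (𝓝[≠] s) (𝓝 (deriv F s)) :=
      hasDerivAt_iff_tendsto_slope.1 h.hasDerivAt
    have hφ : Tendsto (fun x : ℝ => s + r*x/2) (𝓝[≠] (0:ℝ)) (𝓝[≠] s) := by
      rw [tendsto_nhdsWithin_iff]
      constructor
      · have h1 : Continuous (fun x : ℝ => s + r*x/2) := by continuity
        have := (h1.tendsto 0).mono_left (nhdsWithin_le_nhds (s := {(0:ℝ)}ᶜ))
        simpa using this
      · filter_upwards [self_mem_nhdsWithin] with x hx
        simp only [Set.mem_compl_iff, Set.mem_singleton_iff]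
        intro hc
        apply hx
        have h2 : r * x = 0 := by linarith [hc]
        rcases mul_eq_zero.1 h2 with h | h
        · exact absurd h hr
        · exact h
    have hψ : Tendsto (fun x : ℝ => s - r*x/2) (𝓝[≠] (0:ℝ)) (𝓝[≠] s) := by
      rw [tendsto_nhdsWithin_iff]
      constructor
      · have h1 : Continuous (fun x : ℝ => s - r*x/2) := by continuity
        have := (h1.tendsto 0).mono_left (nhdsWithin_le_nhds (s := {(0:ℝ)}ᶜ))
        simpa using this
      · filter_upwards [self_mem_nhdsWithin] with x hx
        simp only [Set.mem_compl_iff, Set.mem_singleton_iff]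
        intro hc
        apply hx
        have h2 : r * x = 0 := by linarith [hc]
        rcases mul_eq_zero.1 h2 with h | h
        · exact absurd h hr
        · exact h
    have h1 := (hs.comp hφ).mul_const (r/2)
    have h2 := (hs.comp hψ).mul_const (r/2)
    have hsum := h1.add h2
    have heq : deriv F s * (r/2) + deriv F s * (r/2) = deriv F s * r := by ring
    rw [heq] at hsum
    refine hsum.congr' ?_
    filter_upwards [self_mem_nhdsWithin] with x hx
    have hx0 : (x:ℝ) ≠ 0 := hx
    simp only [Function.comp, slope_def_field]
    have e1 : s + r*x/2 - s = r*x/2 := by ring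
    have e2 : s - r*x/2 - s = -(r*x/2) := by ring
    rw [e1, e2]
    set A := F (s + r*x/2)
    set B := F (s - r*x/2)
    set C := F s
    field_simp
    ring

lemma shift_div {x : ℝ} (hx : x ≠ 0) (b : ℝ) (na nb : ℤ) :
    b / x ^ na = b / x ^ nb * x ^ (nb - na) := by
  rw [div_eq_mul_inv, div_eq_mul_inv, ← zpow_neg, ← zpow_neg, mul_assoc,
    ← zpow_add₀ hx]
  congr 1
  ring

theorem PExpr.tendsto_of_evalE (e : PExpr) (he : e.goodAtoms) (ρ : ℝ) (n : ℤ)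
    (hev : e.evalE = some (ρ, n)) :
    Tendsto (fun x : ℝ => e.eval x / x ^ n) (𝓝[≠] (0 : ℝ)) (𝓝 ρ) := by
  induction e generalizing ρ n with
  | const c =>
    simp only [PExpr.evalE, Option.some.injEq, Prod.mk.injEq] at hev
    obtain ⟨rfl, rfl⟩ := hev
    simp only [PExpr.eval, zpow_zero, div_one]
    exact tendsto_const_nhds
  | atom F s r =>
    simp only [PExpr.evalE, Option.some.injEq, Prod.mk.injEq] at hev
    obtain ⟨rfl, rfl⟩ := hev
    simp only [PExpr.eval, zpow_one]
    exact atom_tendsto' F s r he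
  | add a b iha ihb =>
    obtain ⟨ha, hb⟩ := he
    cases hae : a.evalE with
    | none => simp [PExpr.evalE, hae] at hev
    | some xa =>
      cases hbe : b.evalE with
      | none => simp [PExpr.evalE, hae, hbe] at hev
      | some xb =>
        simp only [PExpr.evalE, hae, hbe, Option.bind_eq_bind, Option.bind_some, Option.pure_def, Option.some.injEq] at hev
        obtain ⟨ρa, na⟩ := xa
        obtain ⟨ρb, nb⟩ := xb
        have Ha := iha ha ρa na hae
        have Hb := ihb hb ρb nb hbe
        unfold iadd at hev
        rcases lt_trichotomy na nb with h | h | h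
        · rw [if_neg h.ne, if_pos h] at hev
          simp only [Prod.mk.injEq, pure] at hev
          obtain ⟨rfl, rfl⟩ : ρa = ρ ∧ na = n := by
            simpa [Prod.ext_iff] using hev
          have hz : Tendsto (fun x : ℝ => b.eval x / x ^ nb * x ^ (nb - na))
              (𝓝[≠] (0:ℝ)) (𝓝 (ρb * 0)) :=
            Hb.mul (tendsto_zpow_zero' (by omega))
          rw [mul_zero] at hz
          have := Ha.add hz
          rw [add_zero] at this
          refine this.congr' ?_
          filter_upwards [self_mem_nhdsWithin] with x hx
          simp only [PExpr.eval, add_div, shift_div hx (b.eval x) na nb]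
        · rw [if_pos h] at hev
          obtain ⟨rfl, rfl⟩ : ρa + ρb = ρ ∧ na = n := by
            simpa [Prod.ext_iff] using hev
          refine (Ha.add (h ▸ Hb)).congr' ?_
          filter_upwards with x
          simp [PExpr.eval, add_div]
        · rw [if_neg h.ne', if_neg (not_lt.2 h.le)] at hev
          obtain ⟨rfl, rfl⟩ : ρb = ρ ∧ nb = n := by
            simpa [Prod.ext_iff] using hev
          have hz : Tendsto (fun x : ℝ => a.eval x / x ^ na * x ^ (na - nb))
              (𝓝[≠] (0:ℝ)) (𝓝 (ρa * 0)) :=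
            Ha.mul (tendsto_zpow_zero' (by omega))
          rw [mul_zero] at hz
          have := hz.add Hb
          rw [zero_add] at this
          refine this.congr' ?_
          filter_upwards [self_mem_nhdsWithin] with x hx
          simp only [PExpr.eval, add_div, shift_div hx (a.eval x) nb na]
  | sub a b iha ihb =>
    obtain ⟨ha, hb⟩ := he
    cases hae : a.evalE with
    | none => simp [PExpr.evalE, hae] at hev
    | some xa =>
      cases hbe : b.evalE with
      | none => simp [PExpr.evalE, hae, hbe] at hev
      | some xb =>
        simp only [PExpr.evalE, hae, hbe, Option.bind_eq_bind, Option.bind_some, Option.pure_def, Option.some.injEq] at hev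
        obtain ⟨ρa, na⟩ := xa
        obtain ⟨ρb, nb⟩ := xb
        have Ha := iha ha ρa na hae
        have Hb := ihb hb ρb nb hbe
        unfold isub at hev
        rcases lt_trichotomy na nb with h | h | h
        · rw [if_neg h.ne, if_pos h] at hev
          obtain ⟨rfl, rfl⟩ : ρa = ρ ∧ na = n := by
            simpa [Prod.ext_iff] using hev
          have hz : Tendsto (fun x : ℝ => b.eval x / x ^ nb * x ^ (nb - na))
              (𝓝[≠] (0:ℝ)) (𝓝 (ρb * 0)) :=
            Hb.mul (tendsto_zpow_zero' (by omega))
          rw [mul_zero] at hz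
          have := Ha.sub hz
          rw [sub_zero] at this
          refine this.congr' ?_
          filter_upwards [self_mem_nhdsWithin] with x hx
          simp only [PExpr.eval, sub_div, shift_div hx (b.eval x) na nb]
        · rw [if_pos h] at hev
          obtain ⟨rfl, rfl⟩ : ρa - ρb = ρ ∧ na = n := by
            simpa [Prod.ext_iff] using hev
          refine (Ha.sub (h ▸ Hb)).congr' ?_
          filter_upwards with x
          simp [PExpr.eval, sub_div]
        · rw [if_neg h.ne', if_neg (not_lt.2 h.le)] at hev
          obtain ⟨rfl, rfl⟩ : -ρb = ρ ∧ nb = n := by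
            simpa [Prod.ext_iff] using hev
          have hz : Tendsto (fun x : ℝ => a.eval x / x ^ na * x ^ (na - nb))
              (𝓝[≠] (0:ℝ)) (𝓝 (ρa * 0)) :=
            Ha.mul (tendsto_zpow_zero' (by omega))
          rw [mul_zero] at hz
          have := hz.sub Hb
          rw [zero_sub] at this
          refine this.congr' ?_
          filter_upwards [self_mem_nhdsWithin] with x hx
          simp only [PExpr.eval, sub_div, shift_div hx (a.eval x) nb na]
  | mul a b iha ihb =>
    obtain ⟨ha, hb⟩ := he
    cases hae : a.evalE with
    | none => simp [PExpr.evalE, hae] at hev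
    | some xa =>
      cases hbe : b.evalE with
      | none => simp [PExpr.evalE, hae, hbe] at hev
      | some xb =>
        simp only [PExpr.evalE, hae, hbe, Option.bind_eq_bind, Option.bind_some, Option.pure_def, Option.some.injEq] at hev
        obtain ⟨ρa, na⟩ := xa
        obtain ⟨ρb, nb⟩ := xb
        have Ha := iha ha ρa na hae
        have Hb := ihb hb ρb nb hbe
        unfold imul at hev
        obtain ⟨rfl, rfl⟩ : ρa * ρb = ρ ∧ na + nb = n := by
          simpa [Prod.ext_iff] using hev
        refine (Ha.mul Hb).congr' ?_
        filter_upwards [self_mem_nhdsWithin] with x hx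
        simp only [PExpr.eval, zpow_add₀ (show (x:ℝ) ≠ 0 from hx), div_mul_div_comm]
  | div a b iha ihb =>
    obtain ⟨ha, hb⟩ := he
    cases hae : a.evalE with
    | none => simp [PExpr.evalE, hae] at hev
    | some xa =>
      cases hbe : b.evalE with
      | none => simp [PExpr.evalE, hae, hbe] at hev
      | some xb =>
        simp only [PExpr.evalE, hae, hbe, Option.bind_eq_bind, Option.bind_some, Option.pure_def] at hev
        obtain ⟨ρa, na⟩ := xa
        obtain ⟨ρb, nb⟩ := xb
        have Ha := iha ha ρa na hae
        have Hb := ihb hb ρb nb hbe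
        unfold idiv at hev
        split_ifs at hev with h0
        obtain ⟨rfl, rfl⟩ : ρa / ρb = ρ ∧ na - nb = n := by
          simp only [Option.some.injEq, Prod.mk.injEq] at hev
          exact hev
        refine (Ha.div Hb h0).congr' ?_
        filter_upwards [self_mem_nhdsWithin] with x hx
        simp only [Pi.div_apply]
        rw [div_div_div_comm, ← zpow_sub₀ (show (x:ℝ) ≠ 0 from hx)]
        rfl
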